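/- Let H be a tree and Q a subtree of H. Then Q is a good subgraph of H if and only if no vertex in the closed neighborhood of V(Q) is a leaf of H and the subgraph of H induced by the closed neighborhood N_H[V(Q)] is isomorphic to the corona Q∘K_1 (each vertex of Q has exactly one neighbor outside Q, these outside neighbors are distinct and pairwise nonadjacent). -/

import Mathlib

open SimpleGraph

variable {V : Type*}

/-- `D` is a dominating set of `G`. -/
def Dominating (G : SimpleGraph V) (D : Set V) : Prop :=
  ∀ v ∉ D, ∃ u ∈ D, G.Adj v u

/-- `P` is a paired-dominating set of `G`: it is dominating and the induced
subgraph `G[P]` contains a perfect matching (given by an involutive pairing of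
the vertices of `P` along edges inside `P`). -/
def PairedDominating (G : SimpleGraph V) (P : Set V) : Prop :=
  Dominating G P ∧ ∃ m : V → V, ∀ v ∈ P, m v ∈ P ∧ G.Adj v (m v) ∧ m (m v) = v

/-- `(D, P)` is a DP-pair: a partition of the vertex set into a dominating set `D`
and a paired-dominating set `P`. -/
def IsDPPair (G : SimpleGraph V) (D P : Set V) : Prop :=
  Disjoint D P ∧ D ∪ P = Set.univ ∧ Dominating G D ∧ PairedDominating G P

/-- `G` is a DPDP-graph: its vertex set partitions into a dominating set and a
paired-dominating set. -/
def IsDPDP (G : SimpleGraph V) : Prop := ∃ D P, IsDPPair G D P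

/-- A minimal DPDP-graph: a DPDP-graph no proper spanning subgraph of which is DPDP. -/
def IsMinimalDPDP (G : SimpleGraph V) : Prop :=
  IsDPDP G ∧ ∀ G' : SimpleGraph V, G' < G → ¬ IsDPDP G'

/-- A leaf is a vertex of degree 1. -/
def IsLeaf (G : SimpleGraph V) (v : V) : Prop := (G.neighborSet v).ncard = 1

/-- A support vertex is a vertex adjacent to at least one leaf. -/
def IsSupport (G : SimpleGraph V) (v : V) : Prop := ∃ u, G.Adj v u ∧ IsLeaf G u

/-- The list of consecutive arcs of an oriented path given as a list of vertices. -/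
def listArcs {V : Type*} (l : List V) : List (V × V) := l.zip l.tail

/-- `Q` is a good subgraph of `H`: `Q` has no isolated vertices and there is a
family of oriented paths `p v` (one starting at each vertex `v` of `Q`), pairwise
arc-disjoint and consistently oriented, using only edges of `H` outside `Q`,
whose arcs include an orientation of every edge of `H` incident with `Q` but not
in `Q`, such that: every vertex of `Q` has out-degree 1 and in-degree
`d_H(v) − d_Q(v) − 1`; every inner vertex `x` of a path has out-degree 1 and
in-degree `d_H(x) − 1`; and every terminal vertex `x` of a path has in-degree
strictly less than `d_H(x)` (degrees of arcs being taken over the whole family). -/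
def IsGoodSubgraph {V : Type*} [Fintype V] (H : SimpleGraph V) (Q : H.Subgraph) : Prop :=
  (∀ v ∈ Q.verts, ∃ u, Q.Adj v u) ∧
  ∃ p : V → List V,
    (∀ v ∈ Q.verts, (p v).head? = some v ∧ (p v).Nodup ∧ 2 ≤ (p v).length) ∧
    (∀ v ∈ Q.verts, ∀ a ∈ listArcs (p v), H.Adj a.1 a.2 ∧ ¬ Q.Adj a.1 a.2) ∧
    (∀ v ∈ Q.verts, ∀ w ∈ Q.verts, ∀ a ∈ listArcs (p v), ∀ b ∈ listArcs (p w),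
      (v ≠ w → a ≠ b) ∧ a ≠ (b.2, b.1)) ∧
    (∀ u w : V, H.Adj u w → u ∈ Q.verts → ¬ Q.Adj u w →
      ∃ v ∈ Q.verts, (u, w) ∈ listArcs (p v) ∨ (w, u) ∈ listArcs (p v)) ∧
    (let A : Set (V × V) := {a | ∃ v ∈ Q.verts, a ∈ listArcs (p v)}
     let outdeg : V → ℕ := fun x => ({w | (x, w) ∈ A} : Set V).ncard
     let indeg : V → ℕ := fun x => ({w | (w, x) ∈ A} : Set V).ncard
     (∀ v ∈ Q.verts, outdeg v = 1 ∧
        indeg v = (H.neighborSet v).ncard - (Q.neighborSet v).ncard - 1) ∧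
     (∀ v ∈ Q.verts, ∀ x ∈ p v, x ≠ v → (p v).getLast? ≠ some x →
        outdeg x = 1 ∧ indeg x = (H.neighborSet x).ncard - 1) ∧
     (∀ v ∈ Q.verts, ∀ x : V, (p v).getLast? = some x →
        indeg x < (H.neighborSet x).ncard))

/-- For a subtree `Q` of a tree `H`: `Q` is a good subgraph of `H` if and only if
no vertex of the closed neighborhood of `V(Q)` is a leaf of `H` and the subgraph
induced by this closed neighborhood is the corona `Q ∘ K₁`: every vertex of `Q`
has exactly one neighbor outside `Q`, and these outside neighbors are distinct
and pairwise nonadjacent. -/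
@[simp] lemma listArcs_nil {V : Type*} : listArcs ([] : List V) = [] := rfl
@[simp] lemma listArcs_single {V : Type*} (a : V) : listArcs [a] = [] := rfl
@[simp] lemma listArcs_cons_cons {V : Type*} (a b : V) (t : List V) :
    listArcs (a :: b :: t) = (a, b) :: listArcs (b :: t) := rfl

lemma listArcs_append_left {V : Type*} : ∀ (l r : List V), listArcs l <+: listArcs (l ++ r)
  | [], _ => by simp
  | [a], _ => by simp
  | a :: b :: t, r => by
      obtain ⟨t', ht⟩ := listArcs_append_left (b :: t) r
      exact ⟨t', by simp only [List.cons_append, listArcs_cons_cons, List.cons_append, ht]⟩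

lemma chain'_of_arcs {V : Type*} {R : V → V → Prop} :
    ∀ {l : List V}, (∀ a ∈ listArcs l, R a.1 a.2) → l.Chain' R
  | [], _ => List.isChain_nil
  | [a], _ => List.isChain_singleton a
  | a :: b :: t, h => by
      rw [List.Chain', List.isChain_cons_cons]
      exact ⟨h (a, b) (by simp), chain'_of_arcs (fun x hx => h x (by simp [hx]))⟩

lemma mem_listArcs {V : Type*} {u v : V} :
    ∀ {l : List V}, (u, v) ∈ listArcs l → ∃ l₁ l₂, l = l₁ ++ u :: v :: l₂
  | [], h => by simp at h
  | [a], h => by simp at h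
  | a :: b :: t, h => by
      rw [listArcs_cons_cons, List.mem_cons] at h
      rcases h with h | h
      · exact ⟨[], t, by simp_all⟩
      · obtain ⟨l₁, l₂, he⟩ := mem_listArcs h
        exact ⟨a :: l₁, l₂, by simp [he]⟩

lemma exists_walk_of_chain {V : Type*} {H : SimpleGraph V} :
    ∀ (l : List V) (a v : V), (a :: l).Chain' H.Adj →
      (a :: l).getLast (by simp) = v →
      ∃ w : H.Walk a v, w.edges = (listArcs (a :: l)).map (fun x => s(x.1, x.2))
  | [], a, v, _, hv => by
      subst hv; exact ⟨SimpleGraph.Walk.nil, by simp⟩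
  | b :: t, a, v, hc, hv => by
      rw [List.Chain', List.isChain_cons_cons] at hc
      obtain ⟨w, hw⟩ := exists_walk_of_chain t b v hc.2
        (by rw [← hv]; exact (List.getLast_cons (List.cons_ne_nil b t)).symm)
      exact ⟨SimpleGraph.Walk.cons hc.1 w, by simp [hw]⟩

lemma path_edges_in_Q {V : Type*} {H : SimpleGraph V} (hH : H.IsTree) {Q : H.Subgraph}
    (hQconn : Q.Connected) {v w : V} (hv : v ∈ Q.verts) (hw : w ∈ Q.verts)
    (P : H.Path v w) : ∀ e ∈ (P : H.Walk v w).edges, e ∈ Q.edgeSet := by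
  classical
  obtain ⟨W0⟩ := hQconn.preconnected ⟨v, hv⟩ ⟨w, hw⟩
  have hPeq : P = (W0.map Q.hom).toPath := hH.IsAcyclic.path_unique P _
  intro e he
  rw [hPeq] at he
  have he2 : e ∈ (W0.map Q.hom).edges := SimpleGraph.Walk.edges_toPath_subset _ he
  rw [SimpleGraph.Walk.edges_map] at he2
  obtain ⟨e', he', rfl⟩ := List.mem_map.mp he2
  have := W0.edges_subset_edgeSet he'
  induction e' with
  | _ x y => exact SimpleGraph.Subgraph.mem_edgeSet.mpr ((Q.coe_adj x y).mp this)

lemma adj_in_Q {V : Type*} {H : SimpleGraph V} (hH : H.IsTree) {Q : H.Subgraph}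
    (hQconn : Q.Connected) {v w : V} (hv : v ∈ Q.verts) (hw : w ∈ Q.verts)
    (h : H.Adj v w) : Q.Adj v w := by
  have hP : (SimpleGraph.Walk.cons h SimpleGraph.Walk.nil).IsPath := by
    simp [h.ne]
  have := path_edges_in_Q hH hQconn hv hw ⟨_, hP⟩ s(v, w) (by simp)
  exact SimpleGraph.Subgraph.mem_edgeSet.mp this

lemma no_external_path {V : Type*} {H : SimpleGraph V} (hH : H.IsTree) {Q : H.Subgraph}
    (hQconn : Q.Connected) {l : List V} {v w : V}
    (hW : w ∈ Q.verts) (hV : v ∈ Q.verts) (hne : w ≠ v)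
    (hchain : l.Chain' H.Adj)
    (harc : ∀ a ∈ listArcs l, ¬ Q.Adj a.1 a.2)
    (hhead : l.head? = some w) (hlast : l.getLast? = some v) : False := by
  classical
  obtain ⟨t, rfl⟩ : ∃ t, l = w :: t := by
    cases l with
    | nil => simp at hhead
    | cons a t => exact ⟨t, by simpa using congrArg (Option.getD · w) hhead⟩
  have hlast' : (w :: t).getLast (by simp) = v := by
    rwa [List.getLast?_eq_getLast (by simp), Option.some_inj] at hlast
  obtain ⟨W, hWe⟩ := exists_walk_of_chain t w v hchain hlast'
  have hP : W.bypass.IsPath := W.bypass_isPath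
  have hedges : ∀ e ∈ W.bypass.edges, e ∈ Q.edgeSet :=
    path_edges_in_Q hH hQconn hW hV ⟨W.bypass, hP⟩
  have hnn : ¬ W.bypass.Nil := by
    intro hn
    exact hne (SimpleGraph.Walk.eq_of_length_eq_zero
      (SimpleGraph.Walk.nil_iff_length_eq.mp hn))
  obtain ⟨u, hadj, q, hq⟩ := SimpleGraph.Walk.not_nil_iff.mp hnn
  have he : s(w, u) ∈ W.bypass.edges := by rw [hq]; simp
  have heQ := hedges _ he
  have heW : s(w, u) ∈ W.edges := W.edges_bypass_subset he
  rw [hWe, List.mem_map] at heW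
  obtain ⟨a, ha, hae⟩ := heW
  have : Q.Adj a.1 a.2 := by
    have : s(a.1, a.2) ∈ Q.edgeSet := hae ▸ heQ
    exact SimpleGraph.Subgraph.mem_edgeSet.mp this
  exact harc a ha this

lemma distinct_outside {V : Type*} {H : SimpleGraph V} (hH : H.IsTree) {Q : H.Subgraph}
    (hQconn : Q.Connected) {v w u : V} (hv : v ∈ Q.verts) (hw : w ∈ Q.verts)
    (hu : u ∉ Q.verts) (h1 : H.Adj v u) (h2 : H.Adj w u) (hvw : v ≠ w) : False := by
  have hP : (SimpleGraph.Walk.cons h1 (SimpleGraph.Walk.cons h2.symm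
      SimpleGraph.Walk.nil)).IsPath := by
    simp only [SimpleGraph.Walk.isPath_def, SimpleGraph.Walk.support_cons,
      SimpleGraph.Walk.support_nil]
    simp [h1.ne, hvw, h2.ne']
  have := path_edges_in_Q hH hQconn hv hw ⟨_, hP⟩ s(v, u) (by simp)
  exact hu (Q.edge_vert (SimpleGraph.Subgraph.mem_edgeSet.mp this).symm)

lemma nonadj_outside {V : Type*} {H : SimpleGraph V} (hH : H.IsTree) {Q : H.Subgraph}
    (hQconn : Q.Connected) {v w u u' : V} (hv : v ∈ Q.verts) (hw : w ∈ Q.verts)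
    (hu : u ∉ Q.verts) (hu' : u' ∉ Q.verts) (h1 : H.Adj v u) (h2 : H.Adj w u')
    (h3 : H.Adj u u') : False := by
  classical
  by_cases hvw : v = w
  · subst hvw
    have hP1 : (SimpleGraph.Walk.cons h3 SimpleGraph.Walk.nil).IsPath := by simp [h3.ne]
    have hP2 : (SimpleGraph.Walk.cons h1.symm (SimpleGraph.Walk.cons h2
        SimpleGraph.Walk.nil)).IsPath := by
      simp only [SimpleGraph.Walk.isPath_def, SimpleGraph.Walk.support_cons,
        SimpleGraph.Walk.support_nil]
      simp [h1.ne', h3.ne, h2.ne]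
    have := hH.IsAcyclic.path_unique (⟨_, hP1⟩ : H.Path u u') ⟨_, hP2⟩
    have hlen := congrArg (fun P : H.Path u u' => (P : H.Walk u u').length) this
    simp at hlen
  · have hP : (SimpleGraph.Walk.cons h1 (SimpleGraph.Walk.cons h3
        (SimpleGraph.Walk.cons h2.symm SimpleGraph.Walk.nil))).IsPath := by
      simp only [SimpleGraph.Walk.isPath_def, SimpleGraph.Walk.support_cons,
        SimpleGraph.Walk.support_nil]
      have h5 : v ≠ u' := fun h => hu' (h ▸ hv)
      have h4 : u ≠ w := fun h => hu (h ▸ hw)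
      simp [h1.ne, h3.ne, h2.ne', h5, hvw, h4]
    have := path_edges_in_Q hH hQconn hv hw ⟨_, hP⟩ s(v, u) (by simp)
    exact hu (Q.edge_vert (SimpleGraph.Subgraph.mem_edgeSet.mp this).symm)

lemma exists_Q_adj {V : Type*} {H : SimpleGraph V} {Q : H.Subgraph}
    (hQconn : Q.Connected) {v w : V} (hv : v ∈ Q.verts) (hw : w ∈ Q.verts)
    (hvw : v ≠ w) : ∃ u, Q.Adj v u := by
  obtain ⟨W⟩ := hQconn.preconnected ⟨v, hv⟩ ⟨w, hw⟩
  have hnn : ¬ W.Nil := by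
    intro hn
    have := SimpleGraph.Walk.eq_of_length_eq_zero
      (SimpleGraph.Walk.nil_iff_length_eq.mp hn)
    exact hvw (congrArg Subtype.val this)
  obtain ⟨x, hadj, -, -⟩ := SimpleGraph.Walk.not_nil_iff.mp hnn
  exact ⟨x, (Q.coe_adj _ _).mp hadj⟩

lemma backward_dir {V : Type*} [Fintype V] (H : SimpleGraph V) (hH : H.IsTree)
    (Q : H.Subgraph) (hQconn : Q.Connected)
    (hleaf : ∀ u ∈ Q.verts ∪ {u | ∃ v ∈ Q.verts, H.Adj v u}, ¬ IsLeaf H u)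
    (huniq : ∀ v ∈ Q.verts, ∃! u, u ∉ Q.verts ∧ H.Adj v u)
    (hpair : ∀ v ∈ Q.verts, ∀ w ∈ Q.verts, ∀ u u' : V,
          u ∉ Q.verts → H.Adj v u → u' ∉ Q.verts → H.Adj w u' →
          (v ≠ w → u ≠ u') ∧ ¬ H.Adj u u') :
    IsGoodSubgraph H Q := by
  classical
  choose m hm1 hm2 using fun v hv => ((huniq v hv).exists)
  have hmu : ∀ (v) (hv : v ∈ Q.verts) (u : V), u ∉ Q.verts → H.Adj v u → u = m v hv :=
    fun v hv u h1 h2 => ((huniq v hv).unique ⟨h1, h2⟩ ⟨hm1 v hv, hm2 v hv⟩)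
  set p : V → List V := fun v => if h : v ∈ Q.verts then [v, m v h] else [] with hp
  have hpv : ∀ (v) (hv : v ∈ Q.verts), p v = [v, m v hv] := by
    intro v hv; simp [hp, hv]
  have harcsv : ∀ (v) (hv : v ∈ Q.verts), listArcs (p v) = [(v, m v hv)] := by
    intro v hv; rw [hpv v hv]; rfl
  have hmne : ∀ (v) (hv : v ∈ Q.verts), m v hv ∉ Q.verts := hm1
  have hmemA : ∀ a : V × V, (∃ v ∈ Q.verts, a ∈ listArcs (p v)) ↔
      ∃ (v : V) (hv : v ∈ Q.verts), a = (v, m v hv) := by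
    intro a
    constructor
    · rintro ⟨v, hv, ha⟩
      rw [harcsv v hv, List.mem_singleton] at ha
      exact ⟨v, hv, ha⟩
    · rintro ⟨v, hv, rfl⟩
      exact ⟨v, hv, by rw [harcsv v hv]; simp⟩
  have hdH : ∀ (v) (hv : v ∈ Q.verts),
      (H.neighborSet v).ncard = (Q.neighborSet v).ncard + 1 := by
    intro v hv
    have hset : H.neighborSet v = Q.neighborSet v ∪ {m v hv} := by
      ext u
      simp only [SimpleGraph.mem_neighborSet, Set.mem_union, Set.mem_singleton_iff,
        SimpleGraph.Subgraph.mem_neighborSet]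
      constructor
      · intro hadj
        by_cases huQ : u ∈ Q.verts
        · exact Or.inl (adj_in_Q hH hQconn hv huQ hadj)
        · exact Or.inr (hmu v hv u huQ hadj)
      · rintro (h | rfl)
        · exact Q.adj_sub h
        · exact hm2 v hv
    have hdisj : Disjoint (Q.neighborSet v) ({m v hv} : Set V) := by
      rw [Set.disjoint_singleton_right]
      exact fun h => hmne v hv (Q.edge_vert ((SimpleGraph.Subgraph.mem_neighborSet _ _ _).mp h).symm)
    rw [hset, Set.ncard_union_eq hdisj (Set.toFinite _) (Set.toFinite _), Set.ncard_singleton]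
  constructor
  · -- no isolated vertices
    intro v hv
    by_cases hsing : ∀ w ∈ Q.verts, w = v
    · exfalso
      apply hleaf v (Or.inl hv)
      have : H.neighborSet v = {m v hv} := by
        ext u
        simp only [SimpleGraph.mem_neighborSet, Set.mem_singleton_iff]
        constructor
        · intro hadj
          by_cases huQ : u ∈ Q.verts
          · exact absurd (hsing u huQ) hadj.ne'
          · exact hmu v hv u huQ hadj
        · rintro rfl; exact hm2 v hv
      rw [IsLeaf, this, Set.ncard_singleton]
    · push_neg at hsing
      obtain ⟨w, hw, hwv⟩ := hsing
      exact exists_Q_adj hQconn hv hw (fun h => hwv h.symm)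
  refine ⟨p, ?_, ?_, ?_, ?_, ?_⟩
  · intro v hv
    rw [hpv v hv]
    refine ⟨rfl, ?_, by simp⟩
    have : v ≠ m v hv := fun h => hmne v hv (h ▸ hv)
    simp [this]
  · intro v hv a ha
    rw [harcsv v hv, List.mem_singleton] at ha
    subst ha
    exact ⟨hm2 v hv, fun hQ => hmne v hv (Q.edge_vert hQ.symm)⟩
  · intro v hv w hw a ha b hb
    rw [harcsv v hv, List.mem_singleton] at ha
    rw [harcsv w hw, List.mem_singleton] at hb
    subst ha; subst hb
    constructor
    · intro hvw heq
      exact hvw (congrArg Prod.fst heq)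
    · intro heq
      have : v = m w hw := congrArg Prod.fst heq
      exact hmne w hw (this ▸ hv)
  · intro u w hadj hu hnQ
    have hwQ : w ∉ Q.verts := fun hwm => hnQ (adj_in_Q hH hQconn hu hwm hadj)
    refine ⟨u, hu, Or.inl ?_⟩
    rw [harcsv u hu, List.mem_singleton, hmu u hu w hwQ hadj]
  · intro A outdeg indeg
    refine ⟨?_, ?_, ?_⟩
    · intro v hv
      constructor
      · show ({w | (v, w) ∈ A} : Set V).ncard = 1
        have : {w | (v, w) ∈ A} = {m v hv} := by
          ext u
          simp only [A, Set.mem_setOf_eq, Set.mem_singleton_iff, hmemA]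
          constructor
          · rintro ⟨v', hv', he⟩
            have h1 : v = v' := congrArg Prod.fst he
            subst h1
            exact congrArg Prod.snd he
          · rintro rfl
            exact ⟨v, hv, rfl⟩
        rw [this, Set.ncard_singleton]
      · show ({w | (w, v) ∈ A} : Set V).ncard
          = (H.neighborSet v).ncard - (Q.neighborSet v).ncard - 1
        have h0 : {w | (w, v) ∈ A} = ∅ := by
          ext u
          simp only [A, Set.mem_setOf_eq, Set.mem_empty_iff_false, iff_false, hmemA]
          rintro ⟨v', hv', he⟩
          have : v = m v' hv' := congrArg Prod.snd he
          exact hmne v' hv' (this ▸ hv)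
        rw [h0, Set.ncard_empty, hdH v hv]
        omega
    · intro v hv x hx hxv hxl
      exfalso
      rw [hpv v hv] at hx hxl
      rcases List.mem_pair.mp hx with rfl | rfl
      · exact hxv rfl
      · exact hxl rfl
    · intro v hv x hx
      rw [hpv v hv] at hx
      have hxe : x = m v hv := by
        have h := hx
        simp only [List.getLast?_cons_cons, List.getLast?_singleton, Option.some_inj] at h
        exact h.symm
      subst hxe
      show ({w | (w, m v hv) ∈ A} : Set V).ncard < (H.neighborSet (m v hv)).ncard
      have hin : {w | (w, m v hv) ∈ A} = {v} := by
        ext u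
        simp only [A, Set.mem_setOf_eq, Set.mem_singleton_iff, hmemA]
        constructor
        · rintro ⟨v', hv', he⟩
          have h1 : u = v' := congrArg Prod.fst he
          subst h1
          have h2 : m v hv = m u hv' := congrArg Prod.snd he
          by_contra hne
          exact (hpair u hv' v hv (m u hv') (m v hv) (hmne u hv') (hm2 u hv')
            (hmne v hv) (hm2 v hv)).1 (fun h => hne h) (h2.symm)
        · rintro rfl
          exact ⟨_, hv, rfl⟩
      rw [hin, Set.ncard_singleton]
      have hnl := hleaf (m v hv) (Or.inr ⟨v, hv, hm2 v hv⟩)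
      have hge : 1 ≤ (H.neighborSet (m v hv)).ncard := by
        rw [Nat.one_le_iff_ne_zero, Ne, Set.ncard_eq_zero (Set.toFinite _)]
        intro h
        have : v ∈ H.neighborSet (m v hv) := (hm2 v hv).symm
        simp [h] at this
      rw [IsLeaf] at hnl
      omega

lemma forward_dir {V : Type*} [Fintype V] (H : SimpleGraph V) (hH : H.IsTree)
    (Q : H.Subgraph) (hQconn : Q.Connected) (hgood : IsGoodSubgraph H Q) :
    (∀ u ∈ Q.verts ∪ {u | ∃ v ∈ Q.verts, H.Adj v u}, ¬ IsLeaf H u) ∧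
    (∀ v ∈ Q.verts, ∃! u, u ∉ Q.verts ∧ H.Adj v u) := by
  classical
  obtain ⟨hiso, p, hstart, harcs, hdisj, hcover, hdeg⟩ := hgood
  have hdegQ : ∀ v ∈ Q.verts,
      ({w | (v, w) ∈ {a : V × V | ∃ v ∈ Q.verts, a ∈ listArcs (p v)}} : Set V).ncard = 1 ∧
      ({w | (w, v) ∈ {a : V × V | ∃ v ∈ Q.verts, a ∈ listArcs (p v)}} : Set V).ncard =
        (H.neighborSet v).ncard - (Q.neighborSet v).ncard - 1 := hdeg.1
  have hdegInner : ∀ v ∈ Q.verts, ∀ x ∈ p v, x ≠ v → (p v).getLast? ≠ some x →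
      ({w | (x, w) ∈ {a : V × V | ∃ v ∈ Q.verts, a ∈ listArcs (p v)}} : Set V).ncard = 1 ∧
      ({w | (w, x) ∈ {a : V × V | ∃ v ∈ Q.verts, a ∈ listArcs (p v)}} : Set V).ncard =
        (H.neighborSet x).ncard - 1 := hdeg.2.1
  have hdegLast : ∀ v ∈ Q.verts, ∀ x : V, (p v).getLast? = some x →
      ({w | (w, x) ∈ {a : V × V | ∃ v ∈ Q.verts, a ∈ listArcs (p v)}} : Set V).ncard <
        (H.neighborSet x).ncard := hdeg.2.2
  -- second vertex of each path
  have hsplit : ∀ v ∈ Q.verts, ∃ s t, p v = v :: s :: t ∧ s ∉ Q.verts ∧ H.Adj v s := by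
    intro v hv
    obtain ⟨hhead, hnd, hlen⟩ := hstart v hv
    obtain ⟨s, t, hps⟩ : ∃ s t, p v = v :: s :: t := by
      match hpe : p v with
      | [] => rw [hpe] at hlen; simp at hlen
      | [a] => rw [hpe] at hlen; simp at hlen
      | a :: b :: t =>
        rw [hpe] at hhead
        simp only [List.head?_cons, Option.some_inj] at hhead
        exact ⟨b, t, by rw [hhead]⟩
    have harc : (v, s) ∈ listArcs (p v) := by rw [hps]; simp
    have h2 := harcs v hv (v, s) harc
    refine ⟨s, t, hps, fun hs => h2.2 (adj_in_Q hH hQconn hv hs h2.1), h2.1⟩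
  -- in-degree of vertices of Q is zero
  have hindeg0 : ∀ v ∈ Q.verts,
      {w | (w, v) ∈ {a : V × V | ∃ v ∈ Q.verts, a ∈ listArcs (p v)}} = (∅ : Set V) := by
    intro v hv
    ext u
    simp only [Set.mem_setOf_eq, Set.mem_empty_iff_false, iff_false]
    rintro ⟨w, hw, harc⟩
    have hadj := harcs w hw (u, v) harc
    obtain ⟨l₁, l₂, hpw⟩ := mem_listArcs harc
    obtain ⟨hhead, hnd, hlen⟩ := hstart w hw
    have hne : w ≠ v := by
      intro hwv
      subst hwv
      match l₁, hpw with
      | [], hpw =>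
        rw [hpw] at hhead
        simp only [List.nil_append, List.cons_append, List.head?_cons, Option.some_inj] at hhead
        exact hadj.1.ne (hhead ▸ rfl)
      | c :: l₁', hpw =>
        rw [hpw] at hhead hnd
        simp only [List.nil_append, List.cons_append, List.head?_cons, Option.some_inj] at hhead
        subst hhead
        simp only [List.cons_append, List.nodup_cons] at hnd
        exact hnd.1 (by simp)
    set l' : List V := l₁ ++ [u, v] with hl'
    have hdecomp : p w = l' ++ l₂ := by rw [hpw, hl']; simp
    have hsub : ∀ a ∈ listArcs l', a ∈ listArcs (p w) := by
      intro a ha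
      obtain ⟨t', ht'⟩ := listArcs_append_left l' l₂
      rw [hdecomp, ← ht']
      exact List.mem_append_left _ ha
    have hchain : l'.Chain' H.Adj := chain'_of_arcs (fun a ha => (harcs w hw a (hsub a ha)).1)
    have harc' : ∀ a ∈ listArcs l', ¬ Q.Adj a.1 a.2 :=
      fun a ha => (harcs w hw a (hsub a ha)).2
    have hhead' : l'.head? = some w := by
      match l₁, hl', hpw with
      | [], hl', hpw =>
        rw [hpw] at hhead
        simp only [List.nil_append, List.cons_append, List.head?_cons, Option.some_inj] at hhead
        rw [hl']
        simp [hhead]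
      | c :: l₁', hl', hpw =>
        rw [hpw] at hhead
        simp only [List.nil_append, List.cons_append, List.head?_cons, Option.some_inj] at hhead
        rw [hl']
        simp [hhead]
    have hlast' : l'.getLast? = some v := by
      have : l' = (l₁ ++ [u]) ++ [v] := by simp [hl']
      rw [this, List.getLast?_concat]
    exact no_external_path hH hQconn hw hv hne hchain harc' hhead' hlast'
  -- the unique outside neighbor
  have hcount : ∀ v ∈ Q.verts, ∀ s : V, s ∉ Q.verts → H.Adj v s →
      {u | u ∉ Q.verts ∧ H.Adj v u} = {s} := by
    intro v hv s hs hvs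
    have hQn : Q.neighborSet v ⊆ Q.verts := fun u h =>
      Q.edge_vert ((SimpleGraph.Subgraph.mem_neighborSet _ _ _).mp h).symm
    have hNsplit : H.neighborSet v = Q.neighborSet v ∪ {u | u ∉ Q.verts ∧ H.Adj v u} := by
      ext u
      simp only [SimpleGraph.mem_neighborSet, Set.mem_union, Set.mem_setOf_eq,
        SimpleGraph.Subgraph.mem_neighborSet]
      constructor
      · intro hadj
        by_cases huQ : u ∈ Q.verts
        · exact Or.inl (adj_in_Q hH hQconn hv huQ hadj)
        · exact Or.inr ⟨huQ, hadj⟩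
      · rintro (h | ⟨-, h⟩)
        · exact Q.adj_sub h
        · exact h
    have hdisj2 : Disjoint (Q.neighborSet v) {u | u ∉ Q.verts ∧ H.Adj v u} :=
      Set.disjoint_left.mpr (fun u hu1 hu2 => hu2.1 (hQn hu1))
    have hcard : (H.neighborSet v).ncard =
        (Q.neighborSet v).ncard + ({u | u ∉ Q.verts ∧ H.Adj v u} : Set V).ncard := by
      rw [hNsplit, Set.ncard_union_eq hdisj2 (Set.toFinite _) (Set.toFinite _)]
    have hzero : ({u | u ∉ Q.verts ∧ H.Adj v u} : Set V).ncard = 1 := by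
      have h1 := (hdegQ v hv).2
      rw [hindeg0 v hv, Set.ncard_empty] at h1
      have hmem : s ∈ {u | u ∉ Q.verts ∧ H.Adj v u} := ⟨hs, hvs⟩
      have hpos : 1 ≤ ({u | u ∉ Q.verts ∧ H.Adj v u} : Set V).ncard :=
        (Set.ncard_pos (Set.toFinite _)).mpr ⟨s, hmem⟩
      omega
    obtain ⟨a, ha⟩ := Set.ncard_eq_one.mp hzero
    rw [ha]
    have : s ∈ ({a} : Set V) := ha ▸ (⟨hs, hvs⟩ : s ∈ {u | u ∉ Q.verts ∧ H.Adj v u})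
    rw [Set.mem_singleton_iff] at this
    rw [this]
  constructor
  · -- no leaves
    intro u hu
    rcases hu with hu | ⟨v, hv, hadj⟩
    · -- u in Q
      intro hleaf
      obtain ⟨s, t, hps, hsQ, hvs⟩ := hsplit u hu
      obtain ⟨x, hx⟩ := hiso u hu
      have hxQn : x ∈ Q.neighborSet u := hx
      have h1 : 1 ≤ (Q.neighborSet u).ncard :=
        (Set.ncard_pos (Set.toFinite _)).mpr ⟨x, hxQn⟩
      have hcnt := hcount u hu s hsQ hvs
      have hQn : Q.neighborSet u ⊆ Q.verts := fun y h =>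
        Q.edge_vert ((SimpleGraph.Subgraph.mem_neighborSet _ _ _).mp h).symm
      have hNsplit : H.neighborSet u = Q.neighborSet u ∪ {y | y ∉ Q.verts ∧ H.Adj u y} := by
        ext y
        simp only [SimpleGraph.mem_neighborSet, Set.mem_union, Set.mem_setOf_eq,
          SimpleGraph.Subgraph.mem_neighborSet]
        constructor
        · intro hadj
          by_cases hyQ : y ∈ Q.verts
          · exact Or.inl (adj_in_Q hH hQconn hu hyQ hadj)
          · exact Or.inr ⟨hyQ, hadj⟩
        · rintro (h | ⟨-, h⟩)
          · exact Q.adj_sub h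
          · exact h
      have hdisj2 : Disjoint (Q.neighborSet u) {y | y ∉ Q.verts ∧ H.Adj u y} :=
        Set.disjoint_left.mpr (fun y hy1 hy2 => hy2.1 (hQn hy1))
      have hcard : (H.neighborSet u).ncard =
          (Q.neighborSet u).ncard + ({y | y ∉ Q.verts ∧ H.Adj u y} : Set V).ncard := by
        rw [hNsplit, Set.ncard_union_eq hdisj2 (Set.toFinite _) (Set.toFinite _)]
      rw [hcnt, Set.ncard_singleton] at hcard
      rw [IsLeaf] at hleaf
      omega
    · -- u adjacent to Q
      by_cases huQ : u ∈ Q.verts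
      · -- same as above; reuse by contradiction style
        intro hleaf
        obtain ⟨s, t, hps, hsQ, hvs⟩ := hsplit u huQ
        obtain ⟨x, hx⟩ := hiso u huQ
        have h1 : 1 ≤ (Q.neighborSet u).ncard :=
          (Set.ncard_pos (Set.toFinite _)).mpr ⟨x, hx⟩
        have hcnt := hcount u huQ s hsQ hvs
        have hQn : Q.neighborSet u ⊆ Q.verts := fun y h =>
          Q.edge_vert ((SimpleGraph.Subgraph.mem_neighborSet _ _ _).mp h).symm
        have hNsplit : H.neighborSet u = Q.neighborSet u ∪ {y | y ∉ Q.verts ∧ H.Adj u y} := by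
          ext y
          simp only [SimpleGraph.mem_neighborSet, Set.mem_union, Set.mem_setOf_eq,
            SimpleGraph.Subgraph.mem_neighborSet]
          constructor
          · intro hadj
            by_cases hyQ : y ∈ Q.verts
            · exact Or.inl (adj_in_Q hH hQconn huQ hyQ hadj)
            · exact Or.inr ⟨hyQ, hadj⟩
          · rintro (h | ⟨-, h⟩)
            · exact Q.adj_sub h
            · exact h
        have hdisj2 : Disjoint (Q.neighborSet u) {y | y ∉ Q.verts ∧ H.Adj u y} :=
          Set.disjoint_left.mpr (fun y hy1 hy2 => hy2.1 (hQn hy1))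
        have hcard : (H.neighborSet u).ncard =
            (Q.neighborSet u).ncard + ({y | y ∉ Q.verts ∧ H.Adj u y} : Set V).ncard := by
          rw [hNsplit, Set.ncard_union_eq hdisj2 (Set.toFinite _) (Set.toFinite _)]
        rw [hcnt, Set.ncard_singleton] at hcard
        rw [IsLeaf] at hleaf
        omega
      · -- u outside Q, adjacent to v ∈ Q
        intro hleaf
        obtain ⟨s, t, hps, hsQ, hvs⟩ := hsplit v hv
        have hus : u = s := by
          have := hcount v hv s hsQ hvs
          have hmem : u ∈ {y | y ∉ Q.verts ∧ H.Adj v y} := ⟨huQ, hadj⟩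
          rw [this, Set.mem_singleton_iff] at hmem
          exact hmem
        subst hus
        have hmemvu : (v, u) ∈ listArcs (p v) := by rw [hps]; simp
        have hindg : 1 ≤ ({w | (w, u) ∈
            {a : V × V | ∃ v ∈ Q.verts, a ∈ listArcs (p v)}} : Set V).ncard := by
          refine (Set.ncard_pos (Set.toFinite _)).mpr ⟨v, ?_⟩
          exact ⟨v, hv, hmemvu⟩
        rw [IsLeaf] at hleaf
        match t, hps with
        | [], hps =>
          have hlast : (p v).getLast? = some u := by rw [hps]; rfl
          have := hdegLast v hv u hlast
          omega
        | x :: t', hps =>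
          obtain ⟨-, hnd, -⟩ := hstart v hv
          have hmemu : u ∈ p v := by rw [hps]; simp
          have hnotlast : (p v).getLast? ≠ some u := by
            rw [hps]
            intro hsome
            rw [List.getLast?_cons_cons, List.getLast?_cons_cons] at hsome
            have : u ∈ x :: t' := List.mem_of_getLast? hsome
            rw [hps, List.nodup_cons, List.nodup_cons] at hnd
            exact hnd.2.1 (by simp [this])
          have hune : u ≠ v := fun h => huQ (h ▸ hv)
          have := (hdegInner v hv u hmemu hune hnotlast).2
          omega
  · -- unique outside neighbor
    intro v hv
    obtain ⟨s, t, hps, hsQ, hvs⟩ := hsplit v hv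
    refine ⟨s, ⟨hsQ, hvs⟩, ?_⟩
    intro u hu
    have := hcount v hv s hsQ hvs
    have hmem : u ∈ {y | y ∉ Q.verts ∧ H.Adj v y} := hu
    rw [this, Set.mem_singleton_iff] at hmem
    exact hmem

theorem stmt18 {V : Type*} [Fintype V] (H : SimpleGraph V) (hH : H.IsTree)
    (Q : H.Subgraph) (hQconn : Q.Connected) :
    IsGoodSubgraph H Q ↔
      ((∀ u ∈ Q.verts ∪ {u | ∃ v ∈ Q.verts, H.Adj v u}, ¬ IsLeaf H u) ∧
       (∀ v ∈ Q.verts, ∃! u, u ∉ Q.verts ∧ H.Adj v u) ∧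
       (∀ v ∈ Q.verts, ∀ w ∈ Q.verts, ∀ u u' : V,
          u ∉ Q.verts → H.Adj v u → u' ∉ Q.verts → H.Adj w u' →
          (v ≠ w → u ≠ u') ∧ ¬ H.Adj u u')) := by
  constructor
  · intro hgood
    obtain ⟨h1, h2⟩ := forward_dir H hH Q hQconn hgood
    refine ⟨h1, h2, ?_⟩
    intro v hv w hw u u' hu hvu hu' hwu'
    constructor
    · intro hvw heq
      subst heq
      exact distinct_outside hH hQconn hv hw hu hvu hwu' hvw
    · intro hadj
      exact nonadj_outside hH hQconn hv hw hu hu' hvu hwu' hadj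
  · rintro ⟨h1, h2, h3⟩
    exact backward_dir H hH Q hQconn h1 h2 h3
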